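/- Let ℓ_1, ..., ℓ_m be nonnegative real numbers such that for every i, ℓ_i ≤ sum over j ≠ i of ℓ_j. Then for any integer d ≥ 2 there exist vectors b_1, ..., b_m in R^d with Euclidean norm ‖b_i‖ = ℓ_i for all i and b_1 + ... + b_m = 0. -/

import Mathlib

noncomputable def vv (d : ℕ) (x y : ℝ) : EuclideanSpace ℝ (Fin d) :=
  (WithLp.equiv 2 (Fin d → ℝ)).symm (fun k => if (k:ℕ) = 0 then x else if (k:ℕ) = 1 then y else 0)

lemma vv_add (d : ℕ) (x y x' y' : ℝ) : vv d x y + vv d x' y' = vv d (x+x') (y+y') := by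
  ext k
  simp only [vv, WithLp.equiv_symm_apply, PiLp.toLp_apply, PiLp.add_apply]
  split_ifs <;> ring

lemma vv_zero (d : ℕ) : vv d 0 0 = 0 := by
  ext k
  simp [vv]

lemma norm_vv (d : ℕ) (hd : 2 ≤ d) (x y : ℝ) : ‖vv d x y‖ = Real.sqrt (x^2 + y^2) := by
  rw [EuclideanSpace.norm_eq]
  congr 1
  have h01 : (⟨0, by omega⟩ : Fin d) ≠ ⟨1, by omega⟩ := by simp [Fin.ext_iff]
  have : ∀ k : Fin d, ‖vv d x y k‖^2 =
      (if k = (⟨0, by omega⟩ : Fin d) then x^2 else 0) +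
      (if k = (⟨1, by omega⟩ : Fin d) then y^2 else 0) := by
    intro k
    simp only [vv, WithLp.equiv_symm_apply, PiLp.toLp_apply, Real.norm_eq_abs, sq_abs, Fin.ext_iff]
    split_ifs <;> simp_all
  simp only [this, Finset.sum_add_distrib, Finset.sum_ite_eq', Finset.mem_univ, if_true]

lemma vv_sum (d : ℕ) {ι : Type*} (s : Finset ι) (X Y : ι → ℝ) :
    ∑ i ∈ s, vv d (X i) (Y i) = vv d (∑ i ∈ s, X i) (∑ i ∈ s, Y i) := by
  induction s using Finset.cons_induction with
  | empty => simp [vv_zero]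
  | cons a s ha ih => simp [Finset.sum_cons, ih, vv_add]

theorem stmt_1 (m : ℕ) (hm : 1 ≤ m) (ℓ : Fin m → ℝ) (hℓ : ∀ i, 0 ≤ ℓ i)
    (htri : ∀ i, ℓ i ≤ ∑ j ∈ Finset.univ.erase i, ℓ j)
    (d : ℕ) (hd : 2 ≤ d) :
    ∃ b : Fin m → EuclideanSpace ℝ (Fin d),
      (∀ i, ‖b i‖ = ℓ i) ∧ ∑ i, b i = 0 := by
  classical
  set T : (Fin m → Bool) → ℝ := fun g => ∑ i, (if g i then ℓ i else -ℓ i) with hT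
  obtain ⟨f0, -, hmin0⟩ := Finset.exists_min_image Finset.univ (fun g => |T g|)
    ⟨fun _ => true, Finset.mem_univ _⟩
  simp only [Finset.mem_univ, forall_const] at hmin0
  have hneg : ∀ g : Fin m → Bool, T (fun i => !g i) = -(T g) := by
    intro g
    have hpt : ∀ k : Fin m, (if !g k then ℓ k else -ℓ k) = -(if g k then ℓ k else -ℓ k) := by
      intro k; cases g k <;> simp
    show (∑ k, if !g k then ℓ k else -ℓ k) = -(∑ k, if g k then ℓ k else -ℓ k)
    rw [← Finset.sum_neg_distrib]
    exact Finset.sum_congr rfl fun k _ => hpt k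
  have hex : ∃ f : Fin m → Bool, 0 ≤ T f ∧ ∀ g, T f ≤ |T g| := by
    rcases le_or_gt 0 (T f0) with h | h
    · exact ⟨f0, h, fun g => (abs_of_nonneg h) ▸ hmin0 g⟩
    · refine ⟨fun i => !f0 i, ?_, ?_⟩
      · rw [hneg]; linarith
      · intro g; rw [hneg]
        have := hmin0 g
        rw [abs_of_neg h] at this
        exact this
  obtain ⟨f, hD0, hmin⟩ := hex
  set c : Fin m → ℝ := fun k => if f k then ℓ k else -ℓ k with hc
  set D : ℝ := T f with hDdef
  have hsumc : ∑ k, c k = D := rfl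
  have habsc : ∀ k, |c k| = ℓ k := by
    intro k
    cases hfk : f k <;> simp [hc, hfk, abs_of_nonneg (hℓ k)]
  have hflip : ∀ i : Fin m, T (Function.update f i (!f i)) = D - 2 * c i := by
    intro i
    have hfun : ∀ k, (if Function.update f i (!f i) k then ℓ k else -ℓ k)
        = Function.update c i (-(c i)) k := by
      intro k
      by_cases hk : k = i
      · subst hk
        rw [Function.update_self, Function.update_self]
        cases hfk : f k <;> simp [hc, hfk]
      · rw [Function.update_of_ne hk, Function.update_of_ne hk]
    have h1 : T (Function.update f i (!f i)) = -(c i) + ∑ k ∈ Finset.univ.erase i, c k := by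
      show (∑ k, if Function.update f i (!f i) k then ℓ k else -ℓ k)
          = -(c i) + ∑ k ∈ Finset.univ.erase i, c k
      rw [Finset.sum_congr rfl (fun k _ => hfun k)]
      rw [Finset.sum_update_of_mem (Finset.mem_univ i), Finset.erase_eq]
    have h2 : D = c i + ∑ k ∈ Finset.univ.erase i, c k := by
      rw [← hsumc, ← Finset.add_sum_erase _ _ (Finset.mem_univ i)]
    rw [h1]; linarith
  have hDle : ∀ i : Fin m, f i = true → 0 < ℓ i → D ≤ ℓ i := by
    intro i hfi hpos
    have hcival : c i = ℓ i := by simp [hc, hfi]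
    have h := hmin (Function.update f i (!f i))
    rw [hflip i, hcival] at h
    rcases le_abs.mp h with h' | h'
    · linarith
    · linarith
  rcases eq_or_lt_of_le hD0 with hDzero | hDpos
  · -- D = 0 : all along the axis
    refine ⟨fun k => vv d (c k) 0, fun k => ?_, ?_⟩
    · rw [norm_vv d hd]
      have : (c k)^2 + 0^2 = (c k)^2 := by ring
      rw [this, Real.sqrt_sq_eq_abs, habsc]
    · rw [vv_sum d Finset.univ c (fun _ => (0:ℝ)), hsumc, ← hDzero, Finset.sum_const_zero,
        vv_zero]
  · -- D > 0
    have hex1 : ∃ i, f i = true ∧ 0 < ℓ i := by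
      by_contra hcon
      push_neg at hcon
      have hnp : ∀ k, c k ≤ 0 := by
        intro k
        cases hfk : f k
        · simp [hc, hfk]; linarith [hℓ k]
        · have h1 : ℓ k ≤ 0 := hcon k hfk
          simp [hc, hfk]; linarith
      have : D ≤ 0 := hsumc ▸ Finset.sum_nonpos (fun k _ => hnp k)
      linarith
    obtain ⟨i, hfi, hli⟩ := hex1
    have hci : c i = ℓ i := by simp [hc, hfi]
    have hex2 : ∃ j, j ≠ i ∧ f j = true ∧ 0 < ℓ j := by
      by_contra hcon
      push_neg at hcon
      have hcj : ∀ j, j ≠ i → c j ≤ -ℓ j := by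
        intro j hj
        cases hfk : f j
        · simp [hc, hfk]
        · have h1 : ℓ j ≤ 0 := hcon j hj hfk
          simp [hc, hfk]; linarith [hℓ j]
      have h2 : D = c i + ∑ k ∈ Finset.univ.erase i, c k := by
        rw [← hsumc, ← Finset.add_sum_erase _ _ (Finset.mem_univ i)]
      have h3 : ∑ k ∈ Finset.univ.erase i, c k ≤ ∑ k ∈ Finset.univ.erase i, (-ℓ k) :=
        Finset.sum_le_sum (fun k hk => hcj k (Finset.ne_of_mem_erase hk))
      have h5 := htri i
      rw [Finset.sum_neg_distrib] at h3
      linarith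
    obtain ⟨j, hji, hfj, hlj⟩ := hex2
    have hij : i ≠ j := Ne.symm hji
    have hcj : c j = ℓ j := by simp [hc, hfj]
    have hDi : D ≤ ℓ i := hDle i hfi hli
    have hDj : D ≤ ℓ j := hDle j hfj hlj
    set s' : ℝ := ℓ i + ℓ j - D with hs'def
    have hs' : 0 < s' := by rw [hs'def]; linarith
    set x : ℝ := (s'^2 + (ℓ i)^2 - (ℓ j)^2) / (2*s') with hxdef
    have hx : 2*s'*x = s'^2 + (ℓ i)^2 - (ℓ j)^2 := by
      rw [hxdef]; field_simp
    have key : 0 ≤ (s'+ℓ i+ℓ j)*(s'+ℓ i-ℓ j)*(ℓ j+s'-ℓ i)*(ℓ i+ℓ j-s') := by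
      have f1 : 0 ≤ s'+ℓ i+ℓ j := by linarith [hℓ i, hℓ j]
      have f2 : 0 ≤ s'+ℓ i-ℓ j := by rw [hs'def]; linarith
      have f3 : 0 ≤ ℓ j+s'-ℓ i := by rw [hs'def]; linarith
      have f4 : 0 ≤ ℓ i+ℓ j-s' := by rw [hs'def]; linarith
      exact mul_nonneg (mul_nonneg (mul_nonneg f1 f2) f3) f4
    have hy2 : 0 ≤ (ℓ i)^2 - x^2 := by
      nlinarith [hx, key, mul_pos hs' hs', sq_nonneg (s'*x)]
    set y : ℝ := Real.sqrt ((ℓ i)^2 - x^2) with hydef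
    have hy : y^2 = (ℓ i)^2 - x^2 := Real.sq_sqrt hy2
    refine ⟨fun k => if k = i then vv d x y else if k = j then vv d (s'-x) (-y)
        else vv d (c k) 0, fun k => ?_, ?_⟩
    · by_cases hk : k = i
      · subst hk
        simp only [eq_self_iff_true, if_true]
        rw [norm_vv d hd]
        have : x^2 + y^2 = (ℓ k)^2 := by rw [hy]; ring
        rw [this, Real.sqrt_sq (hℓ k)]
      · by_cases hk' : k = j
        · subst hk'
          simp only [if_neg hk, eq_self_iff_true, if_true]
          rw [norm_vv d hd]
          have : (s'-x)^2 + (-y)^2 = (ℓ k)^2 := by linear_combination hy - hx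
          rw [this, Real.sqrt_sq (hℓ k)]
        · simp only [if_neg hk, if_neg hk']
          rw [norm_vv d hd]
          have : (c k)^2 + 0^2 = (c k)^2 := by ring
          rw [this, Real.sqrt_sq_eq_abs, habsc]
    · have hsplit : ∀ k : Fin m, (if k = i then vv d x y else if k = j then vv d (s'-x) (-y)
          else vv d (c k) 0)
          = vv d (c k) 0 + ((if k = i then vv d (x - ℓ i) y else 0)
            + (if k = j then vv d (s' - x - ℓ j) (-y) else 0)) := by
        intro k
        by_cases hk : k = i
        · subst hk
          rw [if_pos rfl, if_pos rfl, if_neg hij, add_zero, hci, vv_add]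
          congr 1 <;> ring
        · by_cases hk' : k = j
          · subst hk'
            rw [if_neg hk, if_pos rfl, if_neg hk, if_pos rfl, zero_add, hcj, vv_add]
            congr 1 <;> ring
          · rw [if_neg hk, if_neg hk', if_neg hk, if_neg hk']
            simp
      rw [Finset.sum_congr rfl (fun k _ => hsplit k), Finset.sum_add_distrib,
        Finset.sum_add_distrib, vv_sum d Finset.univ c (fun _ => (0:ℝ)), hsumc,
        Finset.sum_const_zero, Finset.sum_ite_eq' Finset.univ i,
        Finset.sum_ite_eq' Finset.univ j]
      simp only [Finset.mem_univ, if_true]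
      rw [vv_add, vv_add]
      convert vv_zero d using 2
      · rw [hs'def]; ring
      · ring
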